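/- Let b ≥ 2, let 𝒜 ⊂ {0,...,b−1} with |𝒜| = b−s whose complement is a union of k disjoint integer intervals, and set C₀ := k + 1 + 2(b−s)/(b log b). Then for every real x, ∑_{a=0}^{b^N−1} |Ĉ_{b^N}(x + a/b^N)| ≤ (C₀ b log b)^N. -/

import Mathlib

open Finset

/-- The standard complex exponential `e(x) = exp(2πix)`. -/
noncomputable def e (x : ℝ) : ℂ := Complex.exp (2 * (Real.pi : ℂ) * Complex.I * (x : ℂ))

/-- Distance from a real number to the nearest integer. -/
noncomputable def nint (x : ℝ) : ℝ := |x - round x|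

/-- Fourier transform of the indicator of integers `n < b^N` all of whose
base-`b` digits lie in `A`. -/
noncomputable def Chat (b : ℕ) (A : Finset ℕ) (N : ℕ) (x : ℝ) : ℂ :=
  ∑ n ∈ (Finset.range (b ^ N)).filter (fun n => ∀ i < N, n / b ^ i % b ∈ A), e (n * x)

/-- The excluded digit set `{0,...,b-1} \ A` is a disjoint union of `k`
(nonempty) intervals of integers. -/
def ExcludedUnionIntervals (b k : ℕ) (A : Finset ℕ) : Prop :=
  ∃ l r : Fin k → ℕ, (∀ i, l i ≤ r i) ∧
    (∀ i j, i ≠ j → Disjoint (Finset.Icc (l i) (r i)) (Finset.Icc (l j) (r j))) ∧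
    Finset.range b \ A = Finset.univ.biUnion (fun i => Finset.Icc (l i) (r i))

lemma e_add (x y : ℝ) : e (x + y) = e x * e y := by
  rw [e, e, e, ← Complex.exp_add]
  push_cast
  ring_nf

lemma e_int (m : ℤ) : e m = 1 := by
  rw [e, show 2 * (Real.pi : ℂ) * Complex.I * ((m : ℝ) : ℂ) = (m : ℤ) * (2 * (Real.pi : ℂ) * Complex.I) by push_cast; ring]
  exact Complex.exp_int_mul_two_pi_mul_I m

lemma abs_e (x : ℝ) : ‖e x‖ = 1 := by
  rw [e, Complex.norm_exp]
  simp

lemma e_nat_mul (n : ℕ) (x : ℝ) : e (n * x) = e x ^ n := by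
  rw [e, e, ← Complex.exp_nat_mul]
  push_cast
  ring_nf

lemma nint_nonneg (x : ℝ) : 0 ≤ nint x := abs_nonneg _

lemma abs_sin_pi (x : ℝ) : 2 * nint x ≤ |Real.sin (Real.pi * x)| := by
  set n := round x with hn
  set r := x - n with hr
  have hrle : |r| ≤ 1/2 := by simpa [hr] using abs_sub_round x
  have hx : Real.pi * x = Real.pi * r + n * Real.pi := by rw [hr]; ring
  rw [hx, Real.sin_add_int_mul_pi, abs_mul]
  have hone : |((-1 : ℝ)) ^ n| = 1 := by
    rcases Int.even_or_odd n with he | ho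
    · rw [he.neg_one_zpow]; norm_num
    · rw [ho.neg_one_zpow]; norm_num
  rw [hone, one_mul]
  have key : 2 * |r| ≤ Real.sin (Real.pi * |r|) := by
    have h1 : 0 ≤ Real.pi * |r| := by positivity
    have h2 : Real.pi * |r| ≤ Real.pi / 2 := by
      nlinarith [Real.pi_pos]
    have := Real.mul_le_sin h1 h2
    calc 2 * |r| = 2 / Real.pi * (Real.pi * |r|) := by
          field_simp
      _ ≤ Real.sin (Real.pi * |r|) := this
  have habs : Real.sin (Real.pi * |r|) = |Real.sin (Real.pi * r)| := by
    rcases abs_cases r with ⟨h1, h2⟩ | ⟨h1, h2⟩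
    · rw [h1, abs_of_nonneg]
      apply Real.sin_nonneg_of_nonneg_of_le_pi
      · positivity
      · nlinarith [Real.pi_pos, hrle, abs_nonneg r, h1 ▸ le_abs_self r]
    · rw [h1, mul_neg, Real.sin_neg, abs_of_nonpos]
      · apply Real.sin_nonpos_of_nonpos_of_neg_pi_le
        · nlinarith [Real.pi_pos]
        · nlinarith [Real.pi_pos, hrle, neg_abs_le r]
  rw [← habs]
  have : nint x = |r| := by rw [nint, hr]
  rw [this]
  exact key

lemma abs_e_sub_one (x : ℝ) : 4 * nint x ≤ ‖e x - 1‖ := by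
  have he : e x - 1 = ((Real.cos (2 * Real.pi * x) - 1 : ℝ) : ℂ) + (Real.sin (2 * Real.pi * x) : ℝ) * Complex.I := by
    rw [e, show 2 * (Real.pi : ℂ) * Complex.I * (x : ℂ) = ((2 * Real.pi * x : ℝ) : ℂ) * Complex.I by push_cast; ring,
      Complex.exp_mul_I]
    rw [← Complex.ofReal_cos, ← Complex.ofReal_sin]
    push_cast
    ring
  rw [he, Complex.norm_add_mul_I]
  have hcos : Real.cos (2 * Real.pi * x) = 1 - 2 * Real.sin (Real.pi * x) ^ 2 := by
    have h1 := Real.cos_two_mul (Real.pi * x)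
    have h2 := Real.sin_sq_add_cos_sq (Real.pi * x)
    have : 2 * Real.pi * x = 2 * (Real.pi * x) := by ring
    rw [this, h1]; nlinarith
  have hsin : Real.sin (2 * Real.pi * x) = 2 * Real.sin (Real.pi * x) * Real.cos (Real.pi * x) := by
    have : 2 * Real.pi * x = 2 * (Real.pi * x) := by ring
    rw [this, Real.sin_two_mul]
  have hsq : (Real.cos (2 * Real.pi * x) - 1) ^ 2 + Real.sin (2 * Real.pi * x) ^ 2
      = (2 * |Real.sin (Real.pi * x)|) ^ 2 := by
    have h2 := Real.sin_sq_add_cos_sq (Real.pi * x)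
    rw [hcos, hsin]
    rw [show (2 * |Real.sin (Real.pi * x)|) ^ 2 = 4 * |Real.sin (Real.pi * x)| ^ 2 by ring, sq_abs]
    nlinarith
  rw [hsq, Real.sqrt_sq (by positivity)]
  have := abs_sin_pi x
  linarith

lemma e_ne_one (x : ℝ) (h : 0 < nint x) : e x ≠ 1 := by
  intro h1
  have := abs_e_sub_one x
  rw [h1] at this
  simp at this
  linarith

lemma geom_bound (l r : ℕ) (u : ℝ) (h : 0 < nint u) :
    ‖∑ d ∈ Finset.Icc l r, e (d * u)‖ ≤ 1 / (2 * nint u) := by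
  have hpos : (0:ℝ) < 1 / (2 * nint u) := by positivity
  rcases lt_or_ge r l with hlr | hlr
  · rw [Finset.Icc_eq_empty (by omega)]
    simpa using hpos.le
  · rw [← Finset.Ico_add_one_right_eq_Icc, Finset.sum_Ico_eq_sum_range]
    have hrw : ∀ i : ℕ, e ((l + i : ℕ) * u) = e (l * u) * e u ^ i := by
      intro i
      push_cast
      rw [show ((l : ℝ) + i) * u = l * u + i * u by ring, e_add, e_nat_mul, e_nat_mul]
    simp only [hrw]
    rw [← Finset.mul_sum]
    rw [geom_sum_eq (e_ne_one u h)]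
    rw [norm_mul, abs_e, one_mul, norm_div]
    have hden : 4 * nint u ≤ ‖e u - 1‖ := abs_e_sub_one u
    have hnum : ‖e u ^ (r + 1 - l) - 1‖ ≤ 2 := by
      calc ‖e u ^ (r + 1 - l) - 1‖ ≤ ‖e u ^ (r + 1 - l)‖ + 1 := by
            simpa using norm_sub_le (e u ^ (r + 1 - l)) 1
        _ ≤ 2 := by rw [norm_pow, abs_e, one_pow]; norm_num
    have hdpos : (0:ℝ) < ‖e u - 1‖ := lt_of_lt_of_le (by linarith) hden
    rw [div_le_div_iff₀ hdpos (by positivity)]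
    calc ‖e u ^ (r + 1 - l) - 1‖ * (2 * nint u) ≤ 2 * (2 * nint u) := by
          apply mul_le_mul_of_nonneg_right hnum (by positivity)
      _ ≤ 1 * ‖e u - 1‖ := by rw [one_mul]; linarith

lemma log_ineq (x : ℝ) (hx : 1 ≤ x) : 2 / (x + 1) ≤ Real.log (x + 2) - Real.log x := by
  set A : ℝ := x + 1 with hA
  have hA2 : 2 ≤ A := by linarith
  set φ : ℝ → ℝ := fun t => Real.log (A + t) - Real.log (A - t) - 2 / A * t with hφ
  have hderiv : ∀ t ∈ Set.Ioo (0:ℝ) 1, HasDerivAt φ (1 / (A + t) + 1 / (A - t) - 2 / A) t := by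
    intro t ht
    have h1 : (0:ℝ) < A + t := by cases ht; linarith
    have h2 : (0:ℝ) < A - t := by cases ht; linarith
    have d1 : HasDerivAt (fun t : ℝ => A + t) 1 t := by
      simpa using (hasDerivAt_id t).const_add A
    have d2 : HasDerivAt (fun t : ℝ => A - t) (-1) t := by
      simpa using (hasDerivAt_id t).const_sub A
    have l1 : HasDerivAt (fun t : ℝ => Real.log (A + t)) (1 / (A + t)) t := by
      simpa using d1.log h1.ne'
    have l2 : HasDerivAt (fun t : ℝ => Real.log (A - t)) (-1 / (A - t)) t := by
      simpa using d2.log h2.ne'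
    have l3 : HasDerivAt (fun t : ℝ => 2 / A * t) (2 / A) t := by
      simpa using (hasDerivAt_id t).const_mul (2 / A)
    have := (l1.sub l2).sub l3
    exact this.congr_deriv (by ring)
  have hcont : ContinuousOn φ (Set.Icc (0:ℝ) 1) := by
    apply ContinuousOn.sub
    apply ContinuousOn.sub
    · apply ContinuousOn.log (by fun_prop)
      intro t ht
      have h1 := ht.1; have h2 := ht.2; intro hc; linarith
    · apply ContinuousOn.log (by fun_prop)
      intro t ht
      have h1 := ht.1; have h2 := ht.2; intro hc
      have : A = t := by linarith [sub_eq_zero.mp hc]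
      linarith
    · fun_prop
  have hmono : MonotoneOn φ (Set.Icc (0:ℝ) 1) := by
    apply monotoneOn_of_deriv_nonneg (convex_Icc 0 1) hcont
    · intro t ht
      rw [interior_Icc] at ht
      exact (hderiv t ht).differentiableAt.differentiableWithinAt
    · intro t ht
      rw [interior_Icc] at ht
      rw [(hderiv t ht).deriv]
      have h1 : (0:ℝ) < A + t := by cases ht; linarith
      have h2 : (0:ℝ) < A - t := by cases ht; linarith
      have h3 : (0:ℝ) < A := by linarith
      rw [div_add_div _ _ h1.ne' h2.ne', sub_nonneg, div_le_div_iff₀ h3 (by positivity)]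
      nlinarith [ht.1, ht.2]
  have h01 := hmono (Set.mem_Icc.mpr ⟨le_refl 0, zero_le_one⟩) (Set.mem_Icc.mpr ⟨zero_le_one, le_refl 1⟩) zero_le_one
  have hφ0 : φ 0 = 0 := by simp [hφ]
  have hφ1 : φ 1 = Real.log (x + 2) - Real.log x - 2 / (x + 1) := by
    simp only [hφ, hA]
    ring_nf
  rw [hφ0, hφ1] at h01
  linarith

lemma harmonic_le (M : ℕ) : ∑ i ∈ Finset.range M, (1 : ℝ) / (i + 1) ≤ Real.log (2 * M + 1) := by
  induction M with
  | zero => simp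
  | succ M ih =>
    rw [Finset.sum_range_succ]
    have key : (1 : ℝ) / (M + 1) ≤ Real.log (2 * (M + 1) + 1) - Real.log (2 * M + 1) := by
      have h := log_ineq (2 * M + 1) (by have := Nat.cast_nonneg (α := ℝ) M; linarith)
      calc (1 : ℝ) / (M + 1) = 2 / (2 * M + 1 + 1) := by field_simp; ring
        _ ≤ Real.log (2 * M + 1 + 2) - Real.log (2 * M + 1) := h
        _ = Real.log (2 * (M + 1) + 1) - Real.log (2 * M + 1) := by ring_nf
    push_cast
    linarith [ih]


lemma e_nat_int_periodic (d : ℕ) (t : ℝ) (m : ℤ) : e (d * (t + m)) = e (d * t) := by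
  have : (d : ℝ) * (t + m) = d * t + ((d * m : ℤ) : ℝ) := by push_cast; ring
  rw [this, e_add, e_int, mul_one]

lemma Chat_periodic (b : ℕ) (A : Finset ℕ) (N : ℕ) (t : ℝ) (m : ℤ) :
    Chat b A N (t + m) = Chat b A N t := by
  unfold Chat
  exact Finset.sum_congr rfl fun n _ => e_nat_int_periodic n t m

lemma g_periodic (A : Finset ℕ) (t : ℝ) (m : ℤ) :
    (∑ d ∈ A, e (d * (t + m))) = ∑ d ∈ A, e (d * t) :=
  Finset.sum_congr rfl fun d _ => e_nat_int_periodic d t m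

lemma Chat_succ (b : ℕ) (A : Finset ℕ) (hb : 0 < b) (hA : A ⊆ Finset.range b)
    (N : ℕ) (y : ℝ) :
    Chat b A (N + 1) y = (∑ d ∈ A, e (d * y)) * Chat b A N (b * y) := by
  unfold Chat
  rw [Finset.sum_mul_sum, ← Finset.sum_product']
  apply Finset.sum_nbij' (i := fun n => (n % b, n / b)) (j := fun p => p.1 + b * p.2)
  · intro n hn
    simp only [Finset.mem_filter, Finset.mem_range] at hn
    obtain ⟨hlt, hdig⟩ := hn
    simp only [Finset.mem_product, Finset.mem_filter, Finset.mem_range]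
    refine ⟨?_, ?_, ?_⟩
    · have := hdig 0 (Nat.succ_pos N)
      simpa using this
    · rw [Nat.div_lt_iff_lt_mul hb, ← pow_succ]
      exact hlt
    · intro i hi
      rw [Nat.div_div_eq_div_mul, ← pow_succ']
      exact hdig (i + 1) (by omega)
  · intro p hp
    simp only [Finset.mem_product, Finset.mem_filter, Finset.mem_range] at hp
    obtain ⟨hd, hm, hdig⟩ := hp
    have hdb : p.1 < b := Finset.mem_range.mp (hA hd)
    simp only [Finset.mem_filter, Finset.mem_range]
    constructor
    · calc p.1 + b * p.2 < b + b * p.2 := by omega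
        _ ≤ b * b ^ N := by nlinarith [hm]
        _ = b ^ (N + 1) := (pow_succ' b N).symm
    · intro i hi
      match i with
      | 0 =>
        simpa [Nat.add_mul_mod_self_left, Nat.mod_eq_of_lt hdb] using hd
      | (j + 1) =>
        have h1 : (p.1 + b * p.2) / b = p.2 := by
          rw [Nat.add_mul_div_left _ _ hb, Nat.div_eq_of_lt hdb, zero_add]
        rw [pow_succ', ← Nat.div_div_eq_div_mul, h1]
        exact hdig j (by omega)
  · intro n _
    simp [Nat.mod_add_div]
  · intro p hp
    simp only [Finset.mem_product, Finset.mem_filter, Finset.mem_range] at hp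
    have hdb : p.1 < b := Finset.mem_range.mp (hA hp.1)
    have h1 : (p.1 + b * p.2) / b = p.2 := by
      rw [Nat.add_mul_div_left _ _ hb, Nat.div_eq_of_lt hdb, zero_add]
    have h2 : (p.1 + b * p.2) % b = p.1 := by
      simp [Nat.add_mul_mod_self_left, Nat.mod_eq_of_lt hdb]
    simp [h1, h2]
  · intro n _
    rw [show ((n : ℕ) : ℝ) * y = ((n % b + b * (n / b) : ℕ) : ℝ) * y by rw [Nat.mod_add_div],
      show ((n % b + b * (n / b) : ℕ) : ℝ) * y
          = ((n % b : ℕ) : ℝ) * y + ((n / b : ℕ) : ℝ) * ((b : ℝ) * y) by push_cast; ring,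
      e_add]

lemma g_card_bound (A : Finset ℕ) (u : ℝ) :
    ‖∑ d ∈ A, e (d * u)‖ ≤ A.card := by
  calc ‖∑ d ∈ A, e (d * u)‖ ≤ ∑ d ∈ A, ‖e (d * u)‖ :=
        norm_sum_le _ _
    _ = A.card := by simp [abs_e]

lemma g_min_bound (b k : ℕ) (A : Finset ℕ) (hA : A ⊆ Finset.range b)
    (l r : Fin k → ℕ)
    (hdisj : ∀ i j, i ≠ j → Disjoint (Finset.Icc (l i) (r i)) (Finset.Icc (l j) (r j)))
    (hsd : Finset.range b \ A = Finset.univ.biUnion (fun i => Finset.Icc (l i) (r i)))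
    (u : ℝ) (h : 0 < nint u) :
    ‖∑ d ∈ A, e (d * u)‖ ≤ ((k : ℝ) + 1) / (2 * nint u) := by
  have hb0 : b = 0 ∨ 0 < b := by omega
  have hsum : ∑ d ∈ A, e (d * u)
      = (∑ d ∈ Finset.range b, e (d * u)) - ∑ d ∈ Finset.range b \ A, e (d * u) := by
    rw [← Finset.sum_sdiff hA]; ring
  have h1 : ‖∑ d ∈ Finset.range b, e (d * u)‖ ≤ 1 / (2 * nint u) := by
    rcases hb0 with hb | hb
    · subst hb; simp; positivity
    · have : Finset.range b = Finset.Icc 0 (b - 1) := by ext n; simp; omega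
      rw [this]; exact geom_bound 0 (b - 1) u h
  have h2 : ‖∑ d ∈ Finset.range b \ A, e (d * u)‖ ≤ (k : ℝ) / (2 * nint u) := by
    rw [hsd, Finset.sum_biUnion (fun i _ j _ hij => hdisj i j hij)]
    calc ‖∑ i : Fin k, ∑ d ∈ Finset.Icc (l i) (r i), e (d * u)‖
        ≤ ∑ i : Fin k, ‖∑ d ∈ Finset.Icc (l i) (r i), e (d * u)‖ :=
          norm_sum_le _ _
      _ ≤ ∑ _i : Fin k, 1 / (2 * nint u) :=
          Finset.sum_le_sum (fun i _ => geom_bound (l i) (r i) u h)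
      _ = (k : ℝ) / (2 * nint u) := by simp; ring
  rw [hsum]
  calc ‖(∑ d ∈ Finset.range b, e (d * u)) - ∑ d ∈ Finset.range b \ A, e (d * u)‖
      ≤ ‖∑ d ∈ Finset.range b, e (d * u)‖
        + ‖∑ d ∈ Finset.range b \ A, e (d * u)‖ :=
        norm_sub_le _ _
    _ ≤ 1 / (2 * nint u) + (k : ℝ) / (2 * nint u) := by linarith
    _ = ((k : ℝ) + 1) / (2 * nint u) := by field_simp; ring

lemma nint_ge (x c : ℝ) (h1 : c ≤ x) (h2 : c ≤ 1 - x) : c ≤ nint x := by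
  rcases le_or_gt (round x) 0 with hz | hz
  · have : (round x : ℝ) ≤ 0 := by exact_mod_cast hz
    rw [nint]
    calc c ≤ x - round x := by linarith
      _ ≤ |x - round x| := le_abs_self _
  · have : (1 : ℝ) ≤ round x := by exact_mod_cast hz
    rw [nint]
    calc c ≤ round x - x := by linarith
      _ ≤ |x - round x| := by rw [abs_sub_comm]; exact le_abs_self _

lemma sum_shift (b : ℕ) (hb : 0 < b) (F : ℝ → ℂ) (hF : ∀ (t : ℝ) (m : ℤ), F (t + m) = F t)
    (u : ℝ) :
    ∑ a ∈ Finset.range b, ‖F (u + a / b)‖ =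
      ∑ a ∈ Finset.range b, ‖F (Int.fract (b * u) / b + a / b)‖ := by
  set j : ℤ := ⌊(b : ℝ) * u⌋ with hj
  have hbz : ((b : ℤ)) ≠ 0 := by omega
  have hbpos : (0 : ℤ) < (b : ℤ) := by omega
  apply Finset.sum_nbij' (i := fun a : ℕ => ((j + a) % b).toNat)
    (j := fun a : ℕ => (((a : ℤ) - j) % b).toNat)
  · intro a _
    have h1 := Int.emod_nonneg (j + a) hbz
    have h2 := Int.emod_lt_of_pos (j + a) hbpos
    simp only [Finset.mem_range]
    omega
  · intro a _
    have h1 := Int.emod_nonneg ((a : ℤ) - j) hbz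
    have h2 := Int.emod_lt_of_pos ((a : ℤ) - j) hbpos
    simp only [Finset.mem_range]
    omega
  · intro a ha
    have ha' : (a : ℤ) < b := by exact_mod_cast Finset.mem_range.mp ha
    have h1 := Int.emod_nonneg (j + a) hbz
    have key : (((((j + a) % b).toNat : ℤ)) - j) % b = (a : ℤ) := by
      rw [Int.toNat_of_nonneg h1, Int.sub_emod, Int.emod_emod_of_dvd _ dvd_rfl, ← Int.sub_emod,
        add_sub_cancel_left]
      exact Int.emod_eq_of_lt (by omega) ha'
    rw [key]
    exact Int.toNat_natCast a
  · intro a ha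
    have ha' : (a : ℤ) < b := by exact_mod_cast Finset.mem_range.mp ha
    have h1 := Int.emod_nonneg ((a : ℤ) - j) hbz
    have key : (j + (((((a : ℤ) - j) % b).toNat : ℤ))) % b = (a : ℤ) := by
      rw [Int.toNat_of_nonneg h1, Int.add_emod, Int.emod_emod_of_dvd _ dvd_rfl, ← Int.add_emod,
        add_sub_cancel]
      exact Int.emod_eq_of_lt (by omega) ha'
    rw [key]
    exact Int.toNat_natCast a
  · intro a _
    congr 1
    have hbR : ((b : ℝ)) ≠ 0 := by positivity
    have hfr : Int.fract ((b : ℝ) * u) = (b : ℝ) * u - j := by rw [Int.fract, hj]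
    have hdm := Int.mul_ediv_add_emod (j + a) b
    have h1 := Int.emod_nonneg (j + a) hbz
    have harg : u + (a : ℝ) / b
        = (Int.fract ((b : ℝ) * u) / b + ((((j + a) % b).toNat : ℕ) : ℝ) / b)
          + (((j + (a : ℤ)) / b : ℤ) : ℝ) := by
      rw [hfr]
      have h2 : ((((j + a) % b).toNat : ℕ) : ℝ) = (((j + a) % b : ℤ) : ℝ) := by
        exact_mod_cast congrArg (fun z : ℤ => (z : ℝ)) (Int.toNat_of_nonneg h1)
      rw [h2]
      have h3 : (((j + a) % b : ℤ) : ℝ) = (j : ℝ) + a - b * (((j + (a : ℤ)) / b : ℤ) : ℝ) := by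
        have : ((j + a) % b : ℤ) = j + a - b * ((j + (a : ℤ)) / b) := by omega
        rw [this]; push_cast; ring
      rw [h3]
      field_simp
      ring
    rw [harg, hF]

lemma level1 (b s k : ℕ) (A : Finset ℕ) (hb : 2 ≤ b) (hs : s ≤ b)
    (hA : A ⊆ Finset.range b) (hcard : A.card = b - s)
    (l r : Fin k → ℕ)
    (hdisj : ∀ i j, i ≠ j → Disjoint (Finset.Icc (l i) (r i)) (Finset.Icc (l j) (r j)))
    (hsd : Finset.range b \ A = Finset.univ.biUnion (fun i => Finset.Icc (l i) (r i)))
    (u : ℝ) :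
    ∑ a ∈ Finset.range b, ‖∑ d ∈ A, e (d * (u + a / b))‖ ≤
      2 * ((b : ℝ) - s) + ((k : ℝ) + 1) * b * Real.log b := by
  have hb0 : 0 < b := by omega
  have hbR : (0 : ℝ) < b := by positivity
  have hshift := sum_shift b hb0 (fun t => ∑ d ∈ A, e (d * t))
    (fun t m => g_periodic A t m) u
  rw [hshift]
  set θ : ℝ := Int.fract ((b : ℝ) * u) / b with hθdef
  have hθ0 : 0 ≤ θ := by
    apply div_nonneg (Int.fract_nonneg _) hbR.le
  have hθ1 : θ < 1 / b := by
    have hfr : Int.fract ((b : ℝ) * u) < 1 := Int.fract_lt_one _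
    rw [hθdef, div_lt_div_iff₀ hbR hbR]
    nlinarith
  have hcardR : (A.card : ℝ) = (b : ℝ) - s := by
    rw [hcard]
    push_cast [hs]
    ring
  set f : ℕ → ℝ := fun a => ‖∑ d ∈ A, e (d * (θ + a / b))‖ with hfdef
  have hf0 : ∀ a, 0 ≤ f a := fun a => norm_nonneg _
  have hsplit : ∑ a ∈ Finset.range b, f a = f 0 + (∑ i ∈ Finset.range (b - 2), f (i + 1)) + f (b - 1) := by
    conv_lhs => rw [show b = (b - 1) + 1 by omega]
    rw [Finset.sum_range_succ, show b - 1 = (b - 2) + 1 by omega, Finset.sum_range_succ']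
    ring
  have hends : ∀ a : ℕ, f a ≤ (b : ℝ) - s := by
    intro a
    rw [hfdef]
    calc ‖∑ d ∈ A, e (d * (θ + a / b))‖ ≤ A.card := g_card_bound A _
      _ = (b : ℝ) - s := hcardR
  set M : ℕ := (b - 1) / 2 with hM
  have hmid : ∀ i ∈ Finset.range (b - 2),
      f (i + 1) ≤ ((k : ℝ) + 1) * b / 2 * (1 / ((min (i + 1) (b - 2 - i) : ℕ) : ℝ)) := by
    intro i hi
    have hib : i < b - 2 := Finset.mem_range.mp hi
    set m : ℕ := min (i + 1) (b - 2 - i) with hm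
    have hm1 : 1 ≤ m := by omega
    have hmi : m ≤ i + 1 := by omega
    have hmc : m ≤ b - 2 - i := by omega
    have hmR : (1 : ℝ) ≤ (m : ℝ) := by exact_mod_cast hm1
    set v : ℝ := θ + (i + 1 : ℕ) / b with hv
    have hc1 : (m : ℝ) / b ≤ v := by
      rw [hv]
      have : (m : ℝ) ≤ ((i + 1 : ℕ) : ℝ) := by exact_mod_cast hmi
      have h2 : (m : ℝ) / b ≤ ((i + 1 : ℕ) : ℝ) / b := by gcongr
      linarith
    have hc2 : (m : ℝ) / b ≤ 1 - v := by
      have h3 : (m : ℝ) + ((i + 1 : ℕ) : ℝ) + 1 ≤ (b : ℝ) := by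
        have : m + (i + 1) + 1 ≤ b := by omega
        exact_mod_cast this
      rw [hv]
      have key : (m : ℝ) / b + ((i + 1 : ℕ) : ℝ) / b + 1 / b ≤ 1 := by
        rw [← add_div, ← add_div, div_le_one hbR]
        linarith
      linarith [hθ1]
    have hcpos : (0 : ℝ) < (m : ℝ) / b := by positivity
    have hnint : (m : ℝ) / b ≤ nint v := nint_ge v ((m : ℝ) / b) hc1 hc2
    have hnpos : 0 < nint v := lt_of_lt_of_le hcpos hnint
    have hbound := g_min_bound b k A hA l r hdisj hsd v hnpos
    have hle2 : ((k : ℝ) + 1) / (2 * nint v) ≤ ((k : ℝ) + 1) * b / 2 * (1 / (m : ℝ)) := by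
      rw [show ((k : ℝ) + 1) * b / 2 * (1 / (m : ℝ)) = ((k : ℝ) + 1) / (2 * ((m : ℝ) / b)) by
        field_simp]
      gcongr
    calc f (i + 1) ≤ ((k : ℝ) + 1) / (2 * nint v) := hbound
      _ ≤ ((k : ℝ) + 1) * b / 2 * (1 / (m : ℝ)) := hle2
  -- sum of reciprocals of mins
  set w : ℕ → ℝ := fun jj => if jj + 1 ≤ M then 1 / ((jj : ℝ) + 1) else 0 with hwdef
  have hw0 : ∀ jj, 0 ≤ w jj := by
    intro jj; rw [hwdef]; dsimp only; split <;> positivity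
  have hterm : ∀ i ∈ Finset.range (b - 2),
      1 / ((min (i + 1) (b - 2 - i) : ℕ) : ℝ) ≤ w i + w (b - 3 - i) := by
    intro i hi
    have hib : i < b - 2 := Finset.mem_range.mp hi
    rcases le_total (i + 1) (b - 2 - i) with hc | hc
    · have hmin : min (i + 1) (b - 2 - i) = i + 1 := min_eq_left hc
      have hiM : i + 1 ≤ M := by omega
      have hwi : w i = 1 / ((i : ℝ) + 1) := by rw [hwdef]; dsimp only; rw [if_pos hiM]
      rw [hmin, hwi]
      have : ((i + 1 : ℕ) : ℝ) = (i : ℝ) + 1 := by push_cast; ring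
      rw [this]
      linarith [hw0 (b - 3 - i)]
    · have hmin : min (i + 1) (b - 2 - i) = b - 2 - i := min_eq_right hc
      have hiM : (b - 3 - i) + 1 ≤ M := by omega
      have hcast : ((b - 3 - i : ℕ) : ℝ) + 1 = ((b - 2 - i : ℕ) : ℝ) := by
        have h5 : (b - 3 - i) + 1 = b - 2 - i := by omega
        exact_mod_cast congrArg (fun n : ℕ => (n : ℝ)) h5
      have hwi : w (b - 3 - i) = 1 / ((b - 2 - i : ℕ) : ℝ) := by
        rw [hwdef]; dsimp only; rw [if_pos hiM, hcast]
      rw [hmin, hwi]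
      linarith [hw0 i]
  have hwsum : ∑ i ∈ Finset.range (b - 2), w i = ∑ i ∈ Finset.range M, 1 / ((i : ℝ) + 1) := by
    rw [hwdef]
    rw [Finset.sum_ite, Finset.sum_const_zero, add_zero]
    have hfil : Finset.filter (fun i => i + 1 ≤ M) (Finset.range (b - 2)) = Finset.range M := by
      ext n
      simp only [Finset.mem_filter, Finset.mem_range]
      omega
    rw [hfil]
  have hrefl : ∑ i ∈ Finset.range (b - 2), w (b - 3 - i) = ∑ i ∈ Finset.range (b - 2), w i := by
    have := Finset.sum_range_reflect w (b - 2)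
    simp only [show ∀ jj, b - 2 - 1 - jj = b - 3 - jj from fun jj => by omega] at this
    exact this
  have hrecip : ∑ i ∈ Finset.range (b - 2), 1 / ((min (i + 1) (b - 2 - i) : ℕ) : ℝ)
      ≤ 2 * ∑ i ∈ Finset.range M, 1 / ((i : ℝ) + 1) := by
    calc ∑ i ∈ Finset.range (b - 2), 1 / ((min (i + 1) (b - 2 - i) : ℕ) : ℝ)
        ≤ ∑ i ∈ Finset.range (b - 2), (w i + w (b - 3 - i)) := Finset.sum_le_sum hterm
      _ = ∑ i ∈ Finset.range (b - 2), w i + ∑ i ∈ Finset.range (b - 2), w (b - 3 - i) :=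
          Finset.sum_add_distrib
      _ = 2 * ∑ i ∈ Finset.range M, 1 / ((i : ℝ) + 1) := by rw [hrefl, hwsum]; ring
  have hH : ∑ i ∈ Finset.range M, 1 / ((i : ℝ) + 1) ≤ Real.log b := by
    calc ∑ i ∈ Finset.range M, 1 / ((i : ℝ) + 1) ≤ Real.log (2 * M + 1) := harmonic_le M
      _ ≤ Real.log b := by
        apply Real.log_le_log (by positivity)
        have : 2 * M + 1 ≤ b := by omega
        exact_mod_cast this
  have hmidsum : ∑ i ∈ Finset.range (b - 2), f (i + 1) ≤ ((k : ℝ) + 1) * b * Real.log b := by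
    calc ∑ i ∈ Finset.range (b - 2), f (i + 1)
        ≤ ∑ i ∈ Finset.range (b - 2), ((k : ℝ) + 1) * b / 2 * (1 / ((min (i + 1) (b - 2 - i) : ℕ) : ℝ)) :=
          Finset.sum_le_sum hmid
      _ = ((k : ℝ) + 1) * b / 2 * ∑ i ∈ Finset.range (b - 2), 1 / ((min (i + 1) (b - 2 - i) : ℕ) : ℝ) := by
          rw [Finset.mul_sum]
      _ ≤ ((k : ℝ) + 1) * b / 2 * (2 * ∑ i ∈ Finset.range M, 1 / ((i : ℝ) + 1)) := by
          apply mul_le_mul_of_nonneg_left hrecip (by positivity)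
      _ ≤ ((k : ℝ) + 1) * b / 2 * (2 * Real.log b) := by
          apply mul_le_mul_of_nonneg_left (by linarith) (by positivity)
      _ = ((k : ℝ) + 1) * b * Real.log b := by ring
  rw [hsplit]
  have h1 := hends 0
  have h2 := hends (b - 1)
  linarith

lemma e_zero : e 0 = 1 := by simp [e]



theorem stmt4 (b s k N : ℕ) (A : Finset ℕ) (hb : 2 ≤ b) (hs : s ≤ b)
    (hA : A ⊆ Finset.range b) (hcard : A.card = b - s)
    (hk : ExcludedUnionIntervals b k A)
    (C₀ : ℝ) (hC₀ : C₀ = (k : ℝ) + 1 + 2 * ((b : ℝ) - s) / ((b : ℝ) * Real.log b))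
    (x : ℝ) :
    ∑ a ∈ Finset.range (b ^ N), ‖Chat b A N (x + (a : ℝ) / (b : ℝ) ^ N)‖ ≤
      (C₀ * b * Real.log b) ^ N := by
  obtain ⟨l, r, hlr, hdisj, hsd⟩ := hk
  have hb0 : 0 < b := by omega
  have hbR : (0 : ℝ) < b := by positivity
  have hlog : 0 < Real.log b := Real.log_pos (by exact_mod_cast hb)
  have hsb : (s : ℝ) ≤ b := by exact_mod_cast hs
  set L : ℝ := 2 * ((b : ℝ) - s) + ((k : ℝ) + 1) * b * Real.log b with hL
  have hL0 : 0 ≤ L := by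
    have h1 : 0 ≤ 2 * ((b : ℝ) - s) := by linarith
    have h2 : 0 ≤ ((k : ℝ) + 1) * b * Real.log b := by positivity
    linarith
  have hLC : L = C₀ * b * Real.log b := by
    rw [hC₀, hL]
    field_simp
    ring
  rw [← hLC]
  induction N generalizing x with
  | zero =>
    simp [Chat, e_zero]
  | succ N ih =>
    have hbNnat : 0 < b ^ N := pow_pos hb0 N
    have hbNR : (0 : ℝ) < (b : ℝ) ^ N := by positivity
    have hbN1R : (0 : ℝ) < (b : ℝ) ^ (N + 1) := by positivity
    have hre : ∑ a ∈ Finset.range (b ^ (N + 1)),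
          ‖Chat b A (N + 1) (x + (a : ℝ) / (b : ℝ) ^ (N + 1))‖
        = ∑ p ∈ (Finset.range (b ^ N)) ×ˢ (Finset.range b),
          ‖Chat b A (N + 1)
            (x + ((p.1 + b ^ N * p.2 : ℕ) : ℝ) / (b : ℝ) ^ (N + 1))‖ := by
      apply Finset.sum_nbij' (i := fun a => (a % b ^ N, a / b ^ N))
        (j := fun p => p.1 + b ^ N * p.2)
      · intro a ha
        have halt : a < b ^ (N + 1) := Finset.mem_range.mp ha
        simp only [Finset.mem_product, Finset.mem_range]
        constructor
        · exact Nat.mod_lt _ hbNnat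
        · rw [Nat.div_lt_iff_lt_mul hbNnat, ← pow_succ']
          exact halt
      · intro p hp
        simp only [Finset.mem_product, Finset.mem_range] at hp
        simp only [Finset.mem_range]
        calc p.1 + b ^ N * p.2 < b ^ N * (p.2 + 1) := by
              rw [Nat.mul_succ]; have := hp.1; omega
          _ ≤ b ^ N * b := Nat.mul_le_mul_left _ (by omega)
          _ = b ^ (N + 1) := (pow_succ b N).symm
      · intro a _
        exact Nat.mod_add_div a (b ^ N)
      · intro p hp
        simp only [Finset.mem_product, Finset.mem_range] at hp
        have h1 : (p.1 + b ^ N * p.2) % b ^ N = p.1 := by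
          rw [Nat.add_mul_mod_self_left, Nat.mod_eq_of_lt hp.1]
        have h2 : (p.1 + b ^ N * p.2) / b ^ N = p.2 := by
          rw [Nat.add_mul_div_left _ _ hbNnat, Nat.div_eq_of_lt hp.1, zero_add]
        exact Prod.ext h1 h2
      · intro a _
        rw [Nat.mod_add_div a (b ^ N)]
    rw [hre, Finset.sum_product]
    have hstep : ∀ a₁ ∈ Finset.range (b ^ N),
        ∑ a₀ ∈ Finset.range b, ‖Chat b A (N + 1)
            (x + ((a₁ + b ^ N * a₀ : ℕ) : ℝ) / (b : ℝ) ^ (N + 1))‖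
          ≤ ‖Chat b A N ((b : ℝ) * x + (a₁ : ℝ) / (b : ℝ) ^ N)‖ * L := by
      intro a₁ _
      have hinner : ∀ a₀ : ℕ, ‖Chat b A (N + 1)
            (x + ((a₁ + b ^ N * a₀ : ℕ) : ℝ) / (b : ℝ) ^ (N + 1))‖
          = ‖Chat b A N ((b : ℝ) * x + (a₁ : ℝ) / (b : ℝ) ^ N)‖
            * ‖∑ d ∈ A, e (d * ((x + (a₁ : ℝ) / (b : ℝ) ^ (N + 1)) + a₀ / b))‖ := by
        intro a₀
        have hy : x + ((a₁ + b ^ N * a₀ : ℕ) : ℝ) / (b : ℝ) ^ (N + 1)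
            = (x + (a₁ : ℝ) / (b : ℝ) ^ (N + 1)) + (a₀ : ℝ) / b := by
          push_cast
          field_simp
          ring
        rw [hy, Chat_succ b A hb0 hA N _, norm_mul]
        have hby : (b : ℝ) * ((x + (a₁ : ℝ) / (b : ℝ) ^ (N + 1)) + (a₀ : ℝ) / b)
            = ((b : ℝ) * x + (a₁ : ℝ) / (b : ℝ) ^ N) + ((a₀ : ℤ) : ℝ) := by
          push_cast
          field_simp
          ring
        rw [hby, Chat_periodic]
        ring
      calc ∑ a₀ ∈ Finset.range b, ‖Chat b A (N + 1)
            (x + ((a₁ + b ^ N * a₀ : ℕ) : ℝ) / (b : ℝ) ^ (N + 1))‖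
          = ‖Chat b A N ((b : ℝ) * x + (a₁ : ℝ) / (b : ℝ) ^ N)‖
            * ∑ a₀ ∈ Finset.range b, ‖∑ d ∈ A,
                e (d * ((x + (a₁ : ℝ) / (b : ℝ) ^ (N + 1)) + a₀ / b))‖ := by
            rw [Finset.mul_sum]
            exact Finset.sum_congr rfl fun a₀ _ => hinner a₀
        _ ≤ ‖Chat b A N ((b : ℝ) * x + (a₁ : ℝ) / (b : ℝ) ^ N)‖ * L := by
            apply mul_le_mul_of_nonneg_left _ (norm_nonneg _)
            exact level1 b s k A hb hs hA hcard l r hdisj hsd _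
    calc ∑ a₁ ∈ Finset.range (b ^ N), ∑ a₀ ∈ Finset.range b,
          ‖Chat b A (N + 1)
            (x + ((a₁ + b ^ N * a₀ : ℕ) : ℝ) / (b : ℝ) ^ (N + 1))‖
        ≤ ∑ a₁ ∈ Finset.range (b ^ N),
          ‖Chat b A N ((b : ℝ) * x + (a₁ : ℝ) / (b : ℝ) ^ N)‖ * L :=
          Finset.sum_le_sum hstep
      _ = (∑ a₁ ∈ Finset.range (b ^ N),
          ‖Chat b A N ((b : ℝ) * x + (a₁ : ℝ) / (b : ℝ) ^ N)‖) * L := by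
          rw [Finset.sum_mul]
      _ ≤ L ^ N * L := mul_le_mul_of_nonneg_right (ih ((b : ℝ) * x)) hL0
      _ = L ^ (N + 1) := (pow_succ L N).symm
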